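/- arXiv:2207.04193 — 3 statements merged into one kernel-verified Lean document; each statement's English description precedes it below -/
import Mathlib

section
/- Let 1 ≤ p < ∞ and let R > 0. The extended Mazur map φ : ℓ^p(ℕ,ℝ) → ℓ²(ℕ,ℝ), given coordinatewise by a ↦ sgn(a)|a|^{p/2}, restricts to a uniformly continuous map from the closed ball of radius R in ℓ^p(ℕ,ℝ) into the closed ball of radius R^{p/2} in ℓ²(ℕ,ℝ). -/
open scoped ENNReal

/-- sign times rpow of abs, evaluated on a nonneg number. -/
private lemma mazur_phi_nonneg {s : ℝ} (hs : s ≠ 0) {a : ℝ} (ha : 0 ≤ a) :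
    Real.sign a * |a| ^ s = a ^ s := by
  rcases ha.eq_or_lt with h | h
  · simp [← h, Real.sign_zero, Real.zero_rpow hs]
  · rw [Real.sign_of_pos h, abs_of_pos h, one_mul]

private lemma mazur_phi_neg (s : ℝ) (a : ℝ) :
    Real.sign (-a) * |(-a)| ^ s = -(Real.sign a * |a| ^ s) := by
  rcases lt_trichotomy a 0 with h | h | h
  · rw [Real.sign_of_neg h, Real.sign_of_pos (by linarith : (0:ℝ) < -a), abs_neg]; ring
  · simp [h]
  · rw [Real.sign_of_pos h, Real.sign_of_neg (by linarith : -a < 0), abs_neg]; ring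

private lemma mazur_phi_abs {s : ℝ} (hs : s ≠ 0) (a : ℝ) :
    |Real.sign a * |a| ^ s| = |a| ^ s := by
  rcases lt_trichotomy a 0 with h | h | h
  · rw [Real.sign_of_neg h, neg_one_mul, abs_neg,
      abs_of_nonneg (Real.rpow_nonneg (abs_nonneg a) s)]
  · simp [h, Real.zero_rpow hs]
  · rw [Real.sign_of_pos h, one_mul, abs_of_nonneg (Real.rpow_nonneg (abs_nonneg a) s)]

/-- `(u+v)^s ≤ u^s + v^s` for `0 ≤ s ≤ 1`. -/
private lemma mazur_add_rpow_le {s u v : ℝ} (hs0 : 0 ≤ s) (hs : s ≤ 1)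
    (hu : 0 ≤ u) (hv : 0 ≤ v) : (u + v) ^ s ≤ u ^ s + v ^ s := by
  have h := NNReal.rpow_add_le_add_rpow u.toNNReal v.toNNReal hs0 hs
  have h' := NNReal.coe_le_coe.2 h
  push_cast at h'
  rwa [Real.coe_toNNReal _ hu, Real.coe_toNNReal _ hv] at h'

/-- `a^s - b^s ≤ (a-b)^s` for `0 ≤ b ≤ a`, `0 ≤ s ≤ 1`. -/
private lemma mazur_sub_rpow_le {s a b : ℝ} (hs0 : 0 ≤ s) (hs : s ≤ 1)
    (hb : 0 ≤ b) (hba : b ≤ a) : a ^ s - b ^ s ≤ (a - b) ^ s := by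
  have h := mazur_add_rpow_le hs0 hs hb (by linarith : (0:ℝ) ≤ a - b)
  rw [show b + (a - b) = a by ring] at h
  linarith

/-- `a^s - b^s ≤ s * a^(s-1) * (a-b)` for `0 ≤ b ≤ a`, `1 ≤ s`  (Bernoulli). -/
private lemma mazur_sub_rpow_le' {s a b : ℝ} (hs : 1 ≤ s)
    (hb : 0 ≤ b) (hba : b ≤ a) : a ^ s - b ^ s ≤ s * a ^ (s - 1) * (a - b) := by
  rcases (hb.trans hba).eq_or_lt with h | ha
  · have hb' : b = 0 := le_antisymm (hba.trans h.symm.le) hb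
    simp [← h, hb', Real.zero_rpow (by positivity : s ≠ 0)]
  have hber := one_add_mul_self_le_rpow_one_add
    (s := b / a - 1) (by have := div_nonneg hb ha.le; linarith) hs
  rw [show (1 : ℝ) + (b / a - 1) = b / a by ring, Real.div_rpow hb ha.le] at hber
  have hapow : (0:ℝ) < a ^ s := Real.rpow_pos_of_pos ha s
  have has : a ^ (s - 1) = a ^ s / a := by
    rw [Real.rpow_sub ha, Real.rpow_one]
  have h2 := mul_le_mul_of_nonneg_right hber hapow.le
  rw [div_mul_cancel₀ _ hapow.ne'] at h2
  rw [has]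
  have hid : (1 + s * (b / a - 1)) * a ^ s = a ^ s - s * (a ^ s / a) * (a - b) := by
    field_simp; ring
  rw [hid] at h2
  linarith

/-- Key pointwise estimate for `s ≤ 1`. -/
private lemma mazur_key1 {s : ℝ} (hs0 : 0 < s) (hs : s ≤ 1) (a b : ℝ) :
    |Real.sign a * |a| ^ s - Real.sign b * |b| ^ s| ≤ 2 * |a - b| ^ s := by
  have main : ∀ a b : ℝ, 0 ≤ a →
      |Real.sign a * |a| ^ s - Real.sign b * |b| ^ s| ≤ 2 * |a - b| ^ s := by
    intro a b ha
    rcases le_or_gt 0 b with hb | hb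
    · rw [mazur_phi_nonneg hs0.ne' ha, mazur_phi_nonneg hs0.ne' hb]
      have key : ∀ u v : ℝ, 0 ≤ v → v ≤ u → u ^ s - v ^ s ≤ 2 * |u - v| ^ s := by
        intro u v hv huv
        have := mazur_sub_rpow_le hs0.le hs hv huv
        have h0 : (u - v) ^ s ≤ 2 * |u - v| ^ s := by
          rw [abs_of_nonneg (by linarith : (0:ℝ) ≤ u - v)]
          nlinarith [Real.rpow_nonneg (by linarith : (0:ℝ) ≤ u - v) s]
        linarith
      rcases le_total b a with h | h
      · rw [abs_of_nonneg (by
          have := Real.rpow_le_rpow hb h hs0.le; linarith)]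
        exact key a b hb h
      · rw [abs_of_nonpos (by
          have := Real.rpow_le_rpow ha h hs0.le; linarith), neg_sub]
        rw [abs_sub_comm]
        exact key b a ha h
    · rw [mazur_phi_nonneg hs0.ne' ha, Real.sign_of_neg hb]
      have hab : |a - b| = a + |b| := by
        rw [abs_of_neg hb, abs_of_nonneg (by linarith : (0:ℝ) ≤ a - b)]; ring
      have h1 : a ^ s ≤ (a + |b|) ^ s :=
        Real.rpow_le_rpow ha (by linarith [abs_nonneg b]) hs0.le
      have h2 : |b| ^ s ≤ (a + |b|) ^ s :=
        Real.rpow_le_rpow (abs_nonneg b) (by linarith) hs0.le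
      rw [hab]
      have hnn : 0 ≤ a ^ s + |b| ^ s := by positivity
      rw [show a ^ s - -1 * |b| ^ s = a ^ s + |b| ^ s by ring, abs_of_nonneg hnn]
      linarith
  rcases le_or_gt 0 a with ha | ha
  · exact main a b ha
  · have h := main (-a) (-b) (by linarith)
    rw [mazur_phi_neg, mazur_phi_neg, show -a - -b = -(a - b) by ring, abs_neg] at h
    calc |Real.sign a * |a| ^ s - Real.sign b * |b| ^ s|
        = |(-(Real.sign a * |a| ^ s)) - (-(Real.sign b * |b| ^ s))| := by
          rw [show (-(Real.sign a * |a| ^ s)) - (-(Real.sign b * |b| ^ s))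
            = -(Real.sign a * |a| ^ s - Real.sign b * |b| ^ s) by ring, abs_neg]
      _ ≤ 2 * |a - b| ^ s := h

/-- Key pointwise estimate for `s ≥ 1`. -/
private lemma mazur_key2 {s : ℝ} (hs : 1 ≤ s) (a b : ℝ) :
    |Real.sign a * |a| ^ s - Real.sign b * |b| ^ s|
      ≤ 2 * s * (|a - b| * (|a| + |b|) ^ (s - 1)) := by
  have hs0 : (0:ℝ) < s := lt_of_lt_of_le one_pos hs
  have main : ∀ a b : ℝ, 0 ≤ a →
      |Real.sign a * |a| ^ s - Real.sign b * |b| ^ s|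
        ≤ 2 * s * (|a - b| * (|a| + |b|) ^ (s - 1)) := by
    intro a b ha
    rcases le_or_gt 0 b with hb | hb
    · rw [mazur_phi_nonneg hs0.ne' ha, mazur_phi_nonneg hs0.ne' hb,
        abs_of_nonneg ha, abs_of_nonneg hb]
      have key : ∀ u v : ℝ, 0 ≤ v → v ≤ u →
          u ^ s - v ^ s ≤ 2 * s * ((u - v) * (u + v) ^ (s - 1)) := by
        intro u v hv huv
        have h1 := mazur_sub_rpow_le' hs hv huv
        have h2 : u ^ (s - 1) ≤ (u + v) ^ (s - 1) :=
          Real.rpow_le_rpow (hv.trans huv) (by linarith) (by linarith)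
        have huv' : (0:ℝ) ≤ u - v := by linarith
        have h3 : u ^ (s - 1) * (u - v) ≤ (u + v) ^ (s - 1) * (u - v) :=
          mul_le_mul_of_nonneg_right h2 huv'
        have h4 : (0:ℝ) ≤ (u + v) ^ (s - 1) * (u - v) :=
          mul_nonneg (Real.rpow_nonneg (by linarith) _) huv'
        nlinarith [mul_le_mul_of_nonneg_left h3 hs0.le, mul_nonneg hs0.le h4]
      rcases le_total b a with h | h
      · rw [abs_of_nonneg (by
          have := Real.rpow_le_rpow hb h hs0.le; linarith),
          abs_of_nonneg (by linarith : (0:ℝ) ≤ a - b)]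
        exact key a b hb h
      · rw [abs_of_nonpos (by
          have := Real.rpow_le_rpow ha h hs0.le; linarith), neg_sub,
          abs_of_nonpos (by linarith : a - b ≤ 0), neg_sub, add_comm a b]
        exact key b a ha h
    · rw [mazur_phi_nonneg hs0.ne' ha, Real.sign_of_neg hb, abs_of_nonneg ha]
      have hab : |a - b| = a + |b| := by
        rw [abs_of_neg hb, abs_of_nonneg (by linarith : (0:ℝ) ≤ a - b)]; ring
      have habpos : 0 < a + |b| := by
        have : 0 < |b| := abs_pos.mpr hb.ne
        linarith
      have h1 : a ^ s ≤ (a + |b|) ^ s :=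
        Real.rpow_le_rpow ha (by linarith [abs_nonneg b]) hs0.le
      have h2 : |b| ^ s ≤ (a + |b|) ^ s :=
        Real.rpow_le_rpow (abs_nonneg b) (by linarith) hs0.le
      have h3 : (a + |b|) ^ s = (a + |b|) * (a + |b|) ^ (s - 1) := by
        nth_rewrite 2 [show a + |b| = (a + |b|) ^ (1:ℝ) by rw [Real.rpow_one]]
        rw [← Real.rpow_add habpos]; ring_nf
      rw [show a ^ s - -1 * |b| ^ s = a ^ s + |b| ^ s by ring,
        abs_of_nonneg (by positivity), hab]
      have h4 : a ^ s + |b| ^ s ≤ 2 * ((a + |b|) * (a + |b|) ^ (s - 1)) := by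
        rw [← h3]; linarith
      have h5 : 0 ≤ (a + |b|) * (a + |b|) ^ (s - 1) := by positivity
      nlinarith
  rcases le_or_gt 0 a with ha | ha
  · exact main a b ha
  · have h := main (-a) (-b) (by linarith)
    rw [mazur_phi_neg, mazur_phi_neg, show -a - -b = -(a - b) by ring, abs_neg,
      abs_neg, abs_neg] at h
    calc |Real.sign a * |a| ^ s - Real.sign b * |b| ^ s|
        = |(-(Real.sign a * |a| ^ s)) - (-(Real.sign b * |b| ^ s))| := by
          rw [show (-(Real.sign a * |a| ^ s)) - (-(Real.sign b * |b| ^ s))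
            = -(Real.sign a * |a| ^ s - Real.sign b * |b| ^ s) by ring, abs_neg]
      _ ≤ 2 * s * (|a - b| * (|a| + |b|) ^ (s - 1)) := h


private lemma mazur_self_mul_rpow {x r : ℝ} (hx : 0 ≤ x) (hr : 0 < r) :
    x * x ^ (r - 1) = x ^ r := by
  rcases hx.eq_or_lt with h | h
  · rw [← h, Real.zero_rpow hr.ne', mul_comm, mul_zero]
  · nth_rewrite 1 [show x = x ^ (1:ℝ) by rw [Real.rpow_one]]
    rw [← Real.rpow_add h]; ring_nf

/-- Key pointwise estimate for `q ≥ 2`, with splitting parameter `t`. -/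
private lemma mazur_key3 {q t : ℝ} (hq2 : 2 ≤ q) (ht : 0 < t) (a b : ℝ) :
    |Real.sign a * |a| ^ (q / 2) - Real.sign b * |b| ^ (q / 2)| ^ (2:ℝ)
      ≤ (4 * (q / 2) ^ 2 * t ^ (1 - q)) * |a - b| ^ q
        + (4 * (q / 2) ^ 2 * t * 2 ^ q) * (|a| ^ q + |b| ^ q) := by
  have hs1 : (1:ℝ) ≤ q / 2 := by linarith
  have hq0 : (0:ℝ) < q := by linarith
  set M : ℝ := |a| + |b| with hM
  have hM0 : 0 ≤ M := by positivity
  set d : ℝ := |a - b| with hd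
  have hd0 : 0 ≤ d := abs_nonneg _
  have hdM : d ≤ M := abs_sub a b
  have key := mazur_key2 hs1 a b
  rw [Real.rpow_two]
  -- step 1 : square the estimate
  have h1 : |Real.sign a * |a| ^ (q / 2) - Real.sign b * |b| ^ (q / 2)| ^ 2
      ≤ (2 * (q / 2)) ^ 2 * (d ^ 2 * (M ^ (q / 2 - 1)) ^ 2) := by
    have h' := pow_le_pow_left₀ (abs_nonneg _) key 2
    calc |Real.sign a * |a| ^ (q / 2) - Real.sign b * |b| ^ (q / 2)| ^ 2
        ≤ (2 * (q / 2) * (d * M ^ (q / 2 - 1))) ^ 2 := h'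
      _ = (2 * (q / 2)) ^ 2 * (d ^ 2 * (M ^ (q / 2 - 1)) ^ 2) := by ring
  -- step 2 : convert squared rpow
  have h3 : (M ^ (q / 2 - 1)) ^ 2 = M ^ (q - 2) := by
    rw [← Real.rpow_natCast (M ^ (q / 2 - 1)) 2, ← Real.rpow_mul hM0]
    norm_num
    congr 1
    ring
  have h4 : d ^ 2 * M ^ (q - 2) ≤ d * M ^ (q - 1) := by
    have hMM : M * M ^ (q - 2) = M ^ (q - 1) := by
      have h' := mazur_self_mul_rpow hM0 (show (0:ℝ) < q - 1 by linarith)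
      rw [show q - 1 - 1 = q - 2 by ring] at h'
      exact h'
    have h5 : d ^ 2 * M ^ (q - 2) ≤ (d * M) * M ^ (q - 2) := by
      have h' : d ^ 2 ≤ d * M := by nlinarith
      exact mul_le_mul_of_nonneg_right h' (Real.rpow_nonneg hM0 _)
    calc d ^ 2 * M ^ (q - 2) ≤ (d * M) * M ^ (q - 2) := h5
      _ = d * (M * M ^ (q - 2)) := by ring
      _ = d * M ^ (q - 1) := by rw [hMM]
  -- step 3 : split with the parameter t
  have h6 : d * M ^ (q - 1) ≤ t ^ (1 - q) * d ^ q + t * M ^ q := by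
    have htq : t ^ (1 - q) = (t ^ (q - 1))⁻¹ := by
      rw [show (1 - q : ℝ) = -(q - 1) by ring, Real.rpow_neg ht.le]
    rcases le_or_gt d (t * M) with h | h
    · have h7 : d * M ^ (q - 1) ≤ t * M * M ^ (q - 1) :=
        mul_le_mul_of_nonneg_right h (Real.rpow_nonneg hM0 _)
      have h8 : t * M * M ^ (q - 1) = t * M ^ q := by
        rw [mul_assoc, mazur_self_mul_rpow hM0 hq0]
      have hnn : 0 ≤ t ^ (1 - q) * d ^ q :=
        mul_nonneg (Real.rpow_nonneg ht.le _) (Real.rpow_nonneg hd0 _)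
      rw [h8] at h7
      linarith
    · have hMd : M ≤ d / t := by
        rw [le_div_iff₀ ht]; nlinarith
      have h7 : M ^ (q - 1) ≤ (d / t) ^ (q - 1) :=
        Real.rpow_le_rpow hM0 hMd (by linarith)
      have h8 : d * (d / t) ^ (q - 1) = t ^ (1 - q) * d ^ q := by
        rw [Real.div_rpow hd0 ht.le, htq, ← mazur_self_mul_rpow hd0 hq0]; ring
      have h9 : d * M ^ (q - 1) ≤ d * (d / t) ^ (q - 1) :=
        mul_le_mul_of_nonneg_left h7 hd0
      have hnn : 0 ≤ t * M ^ q := mul_nonneg ht.le (Real.rpow_nonneg hM0 _)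
      rw [h8] at h9
      linarith
  -- step 4 : bound M ^ q
  have h7 : M ^ q ≤ 2 ^ q * (|a| ^ q + |b| ^ q) := by
    have h2q : (0:ℝ) ≤ (2:ℝ) ^ q := Real.rpow_nonneg (by norm_num) q
    rcases le_total |a| |b| with h | h
    · have hMb : M ≤ 2 * |b| := by rw [hM]; linarith
      have := Real.rpow_le_rpow hM0 hMb hq0.le
      rw [Real.mul_rpow (by norm_num) (abs_nonneg b)] at this
      have hnn : 0 ≤ (2:ℝ) ^ q * |a| ^ q :=
        mul_nonneg h2q (Real.rpow_nonneg (abs_nonneg a) _)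
      nlinarith
    · have hMa : M ≤ 2 * |a| := by rw [hM]; linarith
      have := Real.rpow_le_rpow hM0 hMa hq0.le
      rw [Real.mul_rpow (by norm_num) (abs_nonneg a)] at this
      have hnn : 0 ≤ (2:ℝ) ^ q * |b| ^ q :=
        mul_nonneg h2q (Real.rpow_nonneg (abs_nonneg b) _)
      nlinarith
  -- combine
  have hC : (0:ℝ) ≤ 4 * (q / 2) ^ 2 := by positivity
  have c1 : (2 * (q / 2)) ^ 2 * (d ^ 2 * (M ^ (q / 2 - 1)) ^ 2)
      = 4 * (q / 2) ^ 2 * (d ^ 2 * M ^ (q - 2)) := by rw [h3]; ring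
  have c2 : 4 * (q / 2) ^ 2 * (d ^ 2 * M ^ (q - 2))
      ≤ 4 * (q / 2) ^ 2 * (d * M ^ (q - 1)) := mul_le_mul_of_nonneg_left h4 hC
  have c3 : 4 * (q / 2) ^ 2 * (d * M ^ (q - 1))
      ≤ 4 * (q / 2) ^ 2 * (t ^ (1 - q) * d ^ q + t * M ^ q) :=
    mul_le_mul_of_nonneg_left h6 hC
  have c4 : 4 * (q / 2) ^ 2 * (t ^ (1 - q) * d ^ q + t * M ^ q)
      ≤ 4 * (q / 2) ^ 2 * (t ^ (1 - q) * d ^ q + t * (2 ^ q * (|a| ^ q + |b| ^ q))) := by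
    have := mul_le_mul_of_nonneg_left h7 ht.le
    have h' : t ^ (1 - q) * d ^ q + t * M ^ q
        ≤ t ^ (1 - q) * d ^ q + t * (2 ^ q * (|a| ^ q + |b| ^ q)) := by linarith
    exact mul_le_mul_of_nonneg_left h' hC
  calc |Real.sign a * |a| ^ (q / 2) - Real.sign b * |b| ^ (q / 2)| ^ 2
      ≤ (2 * (q / 2)) ^ 2 * (d ^ 2 * (M ^ (q / 2 - 1)) ^ 2) := h1
    _ = 4 * (q / 2) ^ 2 * (d ^ 2 * M ^ (q - 2)) := c1
    _ ≤ 4 * (q / 2) ^ 2 * (d * M ^ (q - 1)) := c2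
    _ ≤ 4 * (q / 2) ^ 2 * (t ^ (1 - q) * d ^ q + t * M ^ q) := c3
    _ ≤ 4 * (q / 2) ^ 2 * (t ^ (1 - q) * d ^ q + t * (2 ^ q * (|a| ^ q + |b| ^ q))) := c4
    _ = (4 * (q / 2) ^ 2 * t ^ (1 - q)) * d ^ q
        + (4 * (q / 2) ^ 2 * t * 2 ^ q) * (|a| ^ q + |b| ^ q) := by ring

/-- For every `R > 0`, the extended Mazur map
`φ(a)_n = sgn(a_n)|a_n|^{p/2}` maps the closed ball of radius `R` of `ℓ^p(ℕ,ℝ)` into the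
closed ball of radius `R^{p/2}` of `ℓ²(ℕ,ℝ)`, and its restriction to this ball is uniformly
continuous. -/
theorem extended_mazur_map_uniformly_continuous_on_balls
    (p : ℝ≥0∞) (hp1 : 1 ≤ p) (hp : p ≠ ∞) (R : ℝ) (hR : 0 < R) :
    (∀ (x : lp (fun _ : ℕ => ℝ) p) (fx : lp (fun _ : ℕ => ℝ) 2), ‖x‖ ≤ R →
      (∀ n : ℕ, fx n = Real.sign (x n) * |x n| ^ (p.toReal / 2)) →
      ‖fx‖ ≤ R ^ (p.toReal / 2)) ∧
    (∀ ε : ℝ, 0 < ε → ∃ δ : ℝ, 0 < δ ∧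
      ∀ (x y : lp (fun _ : ℕ => ℝ) p) (fx fy : lp (fun _ : ℕ => ℝ) 2),
        ‖x‖ ≤ R → ‖y‖ ≤ R → ‖x - y‖ ≤ δ →
        (∀ n : ℕ, fx n = Real.sign (x n) * |x n| ^ (p.toReal / 2)) →
        (∀ n : ℕ, fy n = Real.sign (y n) * |y n| ^ (p.toReal / 2)) →
        ‖fx - fy‖ ≤ ε) := by
  have hq1 : 1 ≤ p.toReal := by
    have h := ENNReal.toReal_mono hp hp1
    simpa using h
  have hq0 : 0 < p.toReal := lt_of_lt_of_le one_pos hq1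
  set q : ℝ := p.toReal with hq
  have h2t : ((2:ℝ≥0∞)).toReal = (2:ℝ) := by simp
  have h2pos : (0:ℝ) < ((2:ℝ≥0∞)).toReal := by rw [h2t]; norm_num
  have hs0 : (0:ℝ) < q / 2 := by positivity
  -- squared norm identity for images of the map
  have himg : ∀ (x : lp (fun _ : ℕ => ℝ) p) (fx : lp (fun _ : ℕ => ℝ) 2),
      (∀ n : ℕ, fx n = Real.sign (x n) * |x n| ^ (q / 2)) →
      HasSum (fun n => ‖x n‖ ^ q) (‖fx‖ ^ (2:ℝ)) := by
    intro x fx hfx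
    have h := lp.hasSum_norm h2pos fx
    rw [h2t] at h
    have heq : (fun n => ‖x n‖ ^ q) = fun n => ‖fx n‖ ^ ((2:ℝ)) := by
      funext n
      simp only [Real.norm_eq_abs]
      rw [hfx n, mazur_phi_abs hs0.ne', ← Real.rpow_mul (abs_nonneg _),
        div_mul_cancel₀ _ (two_ne_zero)]
    rw [heq]
    exact h
  have sq_le : ∀ a c : ℝ, 0 ≤ a → 0 ≤ c → a ^ (2:ℝ) ≤ c ^ (2:ℝ) → a ≤ c := by
    intro a c ha hc h
    exact (Real.rpow_le_rpow_iff ha hc (by norm_num)).mp h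
  constructor
  · intro x fx hx hfx
    have H := himg x fx hfx
    have Hx := lp.hasSum_norm hq0 x
    have heq : ‖fx‖ ^ (2:ℝ) = ‖x‖ ^ q := H.unique Hx
    refine sq_le _ _ (norm_nonneg _) (by positivity) ?_
    rw [heq, ← Real.rpow_mul hR.le, div_mul_cancel₀ _ (two_ne_zero)]
    exact Real.rpow_le_rpow (lp.norm_nonneg' x) hx hq0.le
  · intro ε hε
    have hε2 : 0 < ε ^ (2:ℝ) := Real.rpow_pos_of_pos hε 2
    have hcoord : ∀ (u v : lp (fun _ : ℕ => ℝ) 2) (n : ℕ), (u - v) n = u n - v n := by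
      intro u v n; rw [lp.coeFn_sub]; rfl
    have hcoordp : ∀ (u v : lp (fun _ : ℕ => ℝ) p) (n : ℕ), (u - v) n = u n - v n := by
      intro u v n; rw [lp.coeFn_sub]; rfl
    rcases le_or_gt q 2 with hq2 | hq2
    · -- case 1 ≤ q ≤ 2
      refine ⟨(ε ^ (2:ℝ) / 4) ^ q⁻¹, by positivity, ?_⟩
      intro x y fx fy hx hy hxy hfx hfy
      have Hc := lp.hasSum_norm h2pos (fx - fy)
      rw [h2t] at Hc
      have H4 := (lp.hasSum_norm hq0 (x - y)).mul_left 4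
      have hmain : ‖fx - fy‖ ^ (2:ℝ) ≤ 4 * ‖x - y‖ ^ q := by
        refine hasSum_le ?_ Hc H4
        intro n
        rw [hcoord fx fy n, hfx n, hfy n, hcoordp x y n]
        simp only [Real.norm_eq_abs]
        have hk := mazur_key1 hs0 (by linarith : q / 2 ≤ 1) (x n) (y n)
        have habs : (0:ℝ) ≤ |x n - y n| ^ (q / 2) := Real.rpow_nonneg (abs_nonneg _) _
        calc |Real.sign (x n) * |x n| ^ (q / 2) - Real.sign (y n) * |y n| ^ (q / 2)| ^ (2:ℝ)
            ≤ (2 * |x n - y n| ^ (q / 2)) ^ (2:ℝ) :=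
              Real.rpow_le_rpow (abs_nonneg _) hk (by norm_num)
          _ = 4 * |x n - y n| ^ q := by
              rw [Real.mul_rpow (by norm_num) habs, ← Real.rpow_mul (abs_nonneg _),
                div_mul_cancel₀ _ (two_ne_zero), Real.rpow_two]
              norm_num
      have hdq : ‖x - y‖ ^ q ≤ ε ^ (2:ℝ) / 4 := by
        calc ‖x - y‖ ^ q ≤ ((ε ^ (2:ℝ) / 4) ^ q⁻¹) ^ q :=
              Real.rpow_le_rpow (lp.norm_nonneg' _) hxy hq0.le
          _ = ε ^ (2:ℝ) / 4 := by
              rw [← Real.rpow_mul (by positivity), inv_mul_cancel₀ hq0.ne', Real.rpow_one]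
      refine sq_le _ _ (lp.norm_nonneg' _) hε.le ?_
      linarith
    · -- case q > 2
      set C : ℝ := 4 * (q / 2) ^ 2 with hC
      have hCpos : 0 < C := mul_pos (by norm_num) (pow_pos hs0 2)
      set D : ℝ := C * 2 ^ q * (2 * R ^ q) with hD
      have h2qpos : (0:ℝ) < 2 ^ q := Real.rpow_pos_of_pos (by norm_num) q
      have hRqpos : (0:ℝ) < R ^ q := Real.rpow_pos_of_pos hR q
      have hDpos : 0 < D := by
        rw [hD]; positivity
      set t : ℝ := ε ^ (2:ℝ) / (2 * D) with htdef
      have htpos : 0 < t := by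
        rw [htdef]; positivity
      set K : ℝ := C * t ^ (1 - q) with hK
      have hKpos : 0 < K := by
        rw [hK]
        exact mul_pos hCpos (Real.rpow_pos_of_pos htpos _)
      refine ⟨(ε ^ (2:ℝ) / (2 * K)) ^ q⁻¹, by positivity, ?_⟩
      intro x y fx fy hx hy hxy hfx hfy
      have Hc := lp.hasSum_norm h2pos (fx - fy)
      rw [h2t] at Hc
      have HR := ((lp.hasSum_norm hq0 (x - y)).mul_left K).add
        (((lp.hasSum_norm hq0 x).add (lp.hasSum_norm hq0 y)).mul_left (C * t * 2 ^ q))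
      have hmain : ‖fx - fy‖ ^ (2:ℝ)
          ≤ K * ‖x - y‖ ^ q + C * t * 2 ^ q * (‖x‖ ^ q + ‖y‖ ^ q) := by
        refine hasSum_le ?_ Hc HR
        intro n
        rw [hcoord fx fy n, hfx n, hfy n, hcoordp x y n]
        simp only [Real.norm_eq_abs]
        exact mazur_key3 hq2.le htpos (x n) (y n)
      have hxq : ‖x‖ ^ q ≤ R ^ q := Real.rpow_le_rpow (lp.norm_nonneg' _) hx hq0.le
      have hyq : ‖y‖ ^ q ≤ R ^ q := Real.rpow_le_rpow (lp.norm_nonneg' _) hy hq0.le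
      have hdq : ‖x - y‖ ^ q ≤ ε ^ (2:ℝ) / (2 * K) := by
        calc ‖x - y‖ ^ q ≤ ((ε ^ (2:ℝ) / (2 * K)) ^ q⁻¹) ^ q :=
              Real.rpow_le_rpow (lp.norm_nonneg' _) hxy hq0.le
          _ = ε ^ (2:ℝ) / (2 * K) := by
              rw [← Real.rpow_mul (by positivity), inv_mul_cancel₀ hq0.ne', Real.rpow_one]
      have e1 : K * (ε ^ (2:ℝ) / (2 * K)) = ε ^ (2:ℝ) / 2 := by
        field_simp
      have e2 : C * t * 2 ^ q * (2 * R ^ q) = ε ^ (2:ℝ) / 2 := by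
        have h' : C * t * 2 ^ q * (2 * R ^ q) = t * D := by rw [hD]; ring
        rw [h', htdef]
        field_simp
      have b1 : K * ‖x - y‖ ^ q ≤ ε ^ (2:ℝ) / 2 := by
        have h' := mul_le_mul_of_nonneg_left hdq hKpos.le
        rw [e1] at h'; exact h'
      have b2 : C * t * 2 ^ q * (‖x‖ ^ q + ‖y‖ ^ q) ≤ ε ^ (2:ℝ) / 2 := by
        have hcc : (0:ℝ) ≤ C * t * 2 ^ q := by positivity
        have h' : ‖x‖ ^ q + ‖y‖ ^ q ≤ 2 * R ^ q := by linarith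
        have h'' := mul_le_mul_of_nonneg_left h' hcc
        rw [e2] at h''; exact h''
      refine sq_le _ _ (lp.norm_nonneg' _) hε.le ?_
      linarith
end

section
/- Let 1 ≤ p < ∞. The extended Mazur map φ : ℓ^p(ℕ,ℝ) → ℓ²(ℕ,ℝ), defined coordinatewise by a ↦ sgn(a)|a|^{p/2}, is a homeomorphism (a continuous bijection with continuous inverse). -/
open scoped ENNReal

open Real


noncomputable def sgnPow (r t : ℝ) : ℝ := Real.sign t * |t| ^ r

lemma abs_sgnPow (r t : ℝ) (hr : 0 < r) : |sgnPow r t| = |t| ^ r := by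
  rcases lt_trichotomy t 0 with h | rfl | h
  · simp [sgnPow, Real.sign_of_neg h, abs_mul, abs_of_nonneg (Real.rpow_nonneg (abs_nonneg t) r)]
  · simp [sgnPow, Real.zero_rpow hr.ne']
  · simp [sgnPow, Real.sign_of_pos h, abs_of_nonneg (Real.rpow_nonneg (abs_nonneg t) r)]

lemma sgnPow_of_nonneg (r : ℝ) {t : ℝ} (hr : 0 < r) (ht : 0 ≤ t) : sgnPow r t = t ^ r := by
  rcases eq_or_lt_of_le ht with rfl | h
  · simp [sgnPow, Real.zero_rpow hr.ne']
  · simp [sgnPow, Real.sign_of_pos h, abs_of_nonneg ht]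

lemma sgnPow_neg (r t : ℝ) : sgnPow r (-t) = - sgnPow r t := by
  simp [sgnPow, Real.sign_neg, neg_mul]

lemma sgnPow_comp (r s t : ℝ) (hr : 0 < r) (hs : 0 < s) :
    sgnPow r (sgnPow s t) = sgnPow (s * r) t := by
  rcases lt_trichotomy t 0 with h | rfl | h
  · have h1 : sgnPow s t = -(|t| ^ s) := by simp [sgnPow, Real.sign_of_neg h]
    rw [h1, sgnPow_neg, sgnPow_of_nonneg r hr (Real.rpow_nonneg (abs_nonneg t) s),
      ← Real.rpow_mul (abs_nonneg t)]
    simp [sgnPow, Real.sign_of_neg h]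
  · simp [sgnPow, Real.zero_rpow hs.ne', Real.zero_rpow (by positivity : s * r ≠ 0)]
  · have h1 : sgnPow s t = |t| ^ s := by simp [sgnPow, Real.sign_of_pos h]
    rw [h1, sgnPow_of_nonneg r hr (Real.rpow_nonneg (abs_nonneg t) s),
      ← Real.rpow_mul (abs_nonneg t)]
    simp [sgnPow, Real.sign_of_pos h]

lemma sgnPow_one (t : ℝ) : sgnPow 1 t = t := by
  rcases lt_trichotomy t 0 with h | rfl | h
  · simp [sgnPow, Real.sign_of_neg h, abs_of_neg h]
  · simp [sgnPow]
  · simp [sgnPow, Real.sign_of_pos h, abs_of_pos h]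



lemma rpow_add_le_add_rpow' {a b p : ℝ} (ha : 0 ≤ a) (hb : 0 ≤ b) (hp : 0 ≤ p) (hp1 : p ≤ 1) :
    (a + b) ^ p ≤ a ^ p + b ^ p := by
  have h := NNReal.coe_le_coe.2 (NNReal.rpow_add_le_add_rpow a.toNNReal b.toNNReal hp hp1)
  push_cast [NNReal.coe_rpow, Real.coe_toNNReal _ ha, Real.coe_toNNReal _ hb] at h
  exact h

lemma add_rpow_le_rpow_add' {a b p : ℝ} (ha : 0 ≤ a) (hb : 0 ≤ b) (hp1 : 1 ≤ p) :
    a ^ p + b ^ p ≤ (a + b) ^ p := by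
  have h := NNReal.coe_le_coe.2 (NNReal.add_rpow_le_rpow_add a.toNNReal b.toNNReal hp1)
  push_cast [NNReal.coe_rpow, Real.coe_toNNReal _ ha, Real.coe_toNNReal _ hb] at h
  exact h

-- B0 : MVT-type bound via Bernoulli

lemma rpow_add_le_mul_rpow_add_rpow' {a b p : ℝ} (ha : 0 ≤ a) (hb : 0 ≤ b) (hp1 : 1 ≤ p) :
    (a + b) ^ p ≤ 2 ^ (p - 1) * (a ^ p + b ^ p) := by
  have h := NNReal.coe_le_coe.2 (NNReal.rpow_add_le_mul_rpow_add_rpow a.toNNReal b.toNNReal hp1)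
  push_cast [NNReal.coe_rpow, Real.coe_toNNReal _ ha, Real.coe_toNNReal _ hb] at h
  exact h

lemma rpow_sub_rpow_le {r a b : ℝ} (hr : 0 < r) (hr1 : r ≤ 1) (hb : 0 ≤ b) (hba : b ≤ a) :
    a ^ r - b ^ r ≤ (a - b) ^ r := by
  have h : a ^ r ≤ (a - b) ^ r + b ^ r := by
    have := rpow_add_le_add_rpow' (sub_nonneg.2 hba) hb hr.le hr1
    rwa [sub_add_cancel] at this
  linarith

-- A main

lemma abs_sgnPow_sub_sgnPow_le {r : ℝ} (hr : 0 < r) (hr1 : r ≤ 1) (a b : ℝ) :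
    |sgnPow r a - sgnPow r b| ≤ 2 * |a - b| ^ r := by
  -- first treat nonneg pairs
  have nonneg : ∀ a b : ℝ, 0 ≤ b → b ≤ a → |sgnPow r a - sgnPow r b| ≤ 2 * |a - b| ^ r := by
    intro a b hb hba
    have ha : 0 ≤ a := hb.trans hba
    rw [sgnPow_of_nonneg r hr ha, sgnPow_of_nonneg r hr hb,
      abs_of_nonneg (sub_nonneg.2 (Real.rpow_le_rpow hb hba hr.le)),
      abs_of_nonneg (sub_nonneg.2 hba)]
    have := rpow_sub_rpow_le hr hr1 hb hba
    nlinarith [Real.rpow_nonneg (sub_nonneg.2 hba) r]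
  have mixed : ∀ a b : ℝ, 0 ≤ a → b ≤ 0 → |sgnPow r a - sgnPow r b| ≤ 2 * |a - b| ^ r := by
    intro a b ha hb
    have h1 : sgnPow r b = -((-b) ^ r) := by
      rw [← sgnPow_of_nonneg r hr (neg_nonneg.2 hb), ← sgnPow_neg, neg_neg]
    rw [sgnPow_of_nonneg r hr ha, h1, sub_neg_eq_add,
      abs_of_nonneg (add_nonneg (Real.rpow_nonneg ha r) (Real.rpow_nonneg (neg_nonneg.2 hb) r)),
      abs_of_nonneg (by linarith)]
    have e1 : a ^ r ≤ (a - b) ^ r := Real.rpow_le_rpow ha (by linarith) hr.le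
    have e2 : (-b) ^ r ≤ (a - b) ^ r := Real.rpow_le_rpow (by linarith) (by linarith) hr.le
    linarith
  rcases le_total 0 a with ha | ha <;> rcases le_total 0 b with hb | hb
  · rcases le_total b a with h | h
    · exact nonneg a b hb h
    · rw [abs_sub_comm, abs_sub_comm a b]; exact nonneg b a ha h
  · exact mixed a b ha hb
  · rw [abs_sub_comm, abs_sub_comm a b]; exact mixed b a hb ha
  · have key : ∀ a b : ℝ, b ≤ 0 → a ≤ 0 → |sgnPow r a - sgnPow r b| ≤ 2 * |a - b| ^ r := by
      intro a b hb ha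
      rcases le_total (-b) (-a) with h | h
      · have := nonneg (-a) (-b) (by linarith) h
        rw [sgnPow_neg, sgnPow_neg] at this
        calc |sgnPow r a - sgnPow r b| = |(-sgnPow r a) - (-sgnPow r b)| := by
              rw [show (-sgnPow r a) - (-sgnPow r b) = -(sgnPow r a - sgnPow r b) by ring, abs_neg]
        _ ≤ 2 * |(-a) - (-b)| ^ r := this
        _ = 2 * |a - b| ^ r := by rw [show (-a) - (-b) = -(a-b) by ring, abs_neg]
      · have := nonneg (-b) (-a) (by linarith) h
        rw [sgnPow_neg, sgnPow_neg] at this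
        calc |sgnPow r a - sgnPow r b| = |(-sgnPow r b) - (-sgnPow r a)| := by
              rw [show (-sgnPow r b) - (-sgnPow r a) = -(sgnPow r b - sgnPow r a) by ring, abs_neg,
                abs_sub_comm]
        _ ≤ 2 * |(-b) - (-a)| ^ r := this
        _ = 2 * |a - b| ^ r := by rw [show (-b) - (-a) = -(b-a) by ring, abs_neg, abs_sub_comm]
    exact key a b hb ha

lemma rpow_sub_rpow_le_mul {r a b : ℝ} (hr : 1 ≤ r) (hb : 0 ≤ b) (hba : b ≤ a) :
    a ^ r - b ^ r ≤ r * a ^ (r - 1) * (a - b) := by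
  rcases eq_or_lt_of_le (hb.trans hba) with rfl | hapos
  · have hb0 : b = 0 := le_antisymm (by linarith) hb
    subst hb0; simp
  · have ha : (0:ℝ) < a := hapos
    have hs : -1 ≤ b / a - 1 := by
      have : 0 ≤ b / a := div_nonneg hb ha.le
      linarith
    have hber := one_add_mul_self_le_rpow_one_add hs hr
    rw [show 1 + (b / a - 1) = b / a by ring] at hber
    have hdiv : (b / a) ^ r = b ^ r / a ^ r := Real.div_rpow hb ha.le r
    have hmul := mul_le_mul_of_nonneg_right hber (Real.rpow_nonneg ha.le r)
    rw [hdiv, div_mul_cancel₀ _ (by positivity : a ^ r ≠ 0)] at hmul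
    have hpow : a ^ r = a ^ (r - 1) * a := by
      rw [← Real.rpow_add_one ha.ne' (r-1)]; ring_nf
    have hba' : (b / a) * a ^ r = b * a ^ (r - 1) := by
      rw [hpow]; field_simp
    nlinarith [hmul, hba', hpow]

-- B main

lemma abs_sgnPow_sub_sgnPow_le' {r : ℝ} (hr : 1 ≤ r) (a b : ℝ) :
    |sgnPow r a - sgnPow r b| ≤ r * (|a| + |b|) ^ (r - 1) * |a - b| := by
  have hr0 : (0:ℝ) < r := lt_of_lt_of_le one_pos hr
  have nonneg : ∀ a b : ℝ, 0 ≤ b → b ≤ a →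
      |sgnPow r a - sgnPow r b| ≤ r * (|a| + |b|) ^ (r - 1) * |a - b| := by
    intro a b hb hba
    have ha : 0 ≤ a := hb.trans hba
    rw [sgnPow_of_nonneg r hr0 ha, sgnPow_of_nonneg r hr0 hb,
      abs_of_nonneg (sub_nonneg.2 (Real.rpow_le_rpow hb hba hr0.le)),
      abs_of_nonneg ha, abs_of_nonneg hb, abs_of_nonneg (sub_nonneg.2 hba)]
    have h1 := rpow_sub_rpow_le_mul hr hb hba
    have h2 : a ^ (r - 1) ≤ (a + b) ^ (r - 1) :=
      Real.rpow_le_rpow ha (by linarith) (by linarith)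
    nlinarith [sub_nonneg.2 hba, mul_le_mul_of_nonneg_right h2 (sub_nonneg.2 hba),
      mul_le_mul_of_nonneg_left (mul_le_mul_of_nonneg_right h2 (sub_nonneg.2 hba)) hr0.le]
  have mixed : ∀ a b : ℝ, 0 ≤ a → b ≤ 0 →
      |sgnPow r a - sgnPow r b| ≤ r * (|a| + |b|) ^ (r - 1) * |a - b| := by
    intro a b ha hb
    have h1 : sgnPow r b = -((-b) ^ r) := by
      rw [← sgnPow_of_nonneg r hr0 (neg_nonneg.2 hb), ← sgnPow_neg, neg_neg]
    rw [sgnPow_of_nonneg r hr0 ha, h1, sub_neg_eq_add,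
      abs_of_nonneg (add_nonneg (Real.rpow_nonneg ha r) (Real.rpow_nonneg (neg_nonneg.2 hb) r)),
      abs_of_nonneg ha, abs_of_nonpos hb, abs_of_nonneg (by linarith : (0:ℝ) ≤ a - b)]
    have h2 : a ^ r + (-b) ^ r ≤ (a + -b) ^ r :=
      add_rpow_le_rpow_add' ha (by linarith) hr
    have h3 : (a + -b) ^ r = (a + -b) ^ (r - 1) * (a + -b) := by
      rcases eq_or_lt_of_le (by linarith : (0:ℝ) ≤ a + -b) with h | h
      · rw [← h, Real.zero_rpow (by linarith : r ≠ 0), mul_zero]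
      · rw [← Real.rpow_add_one h.ne' (r-1)]; ring_nf
    have h4 : (0:ℝ) ≤ (a + -b) ^ (r - 1) * (a + -b) :=
      mul_nonneg (Real.rpow_nonneg (by linarith) _) (by linarith)
    calc a ^ r + (-b) ^ r ≤ (a + -b) ^ (r-1) * (a + -b) := by rw [← h3]; exact h2
    _ ≤ r * ((a + -b) ^ (r-1) * (a + -b)) := le_mul_of_one_le_left h4 hr
    _ = r * (a + -b) ^ (r - 1) * (a - b) := by ring
  have key : ∀ a b : ℝ, |sgnPow r a - sgnPow r b| ≤ r * (|a| + |b|) ^ (r - 1) * |a - b| := by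
    intro a b
    rcases le_total 0 a with ha | ha <;> rcases le_total 0 b with hb | hb
    · rcases le_total b a with h | h
      · exact nonneg a b hb h
      · rw [abs_sub_comm, abs_sub_comm a b, add_comm |a|]; exact nonneg b a ha h
    · exact mixed a b ha hb
    · rw [abs_sub_comm, abs_sub_comm a b, add_comm |a|]; exact mixed b a hb ha
    · have e : ∀ x y : ℝ, |(-x) - (-y)| = |x - y| := fun x y => by
        rw [show (-x) - (-y) = -(x-y) by ring, abs_neg]
      rcases le_total (-b) (-a) with h | h
      · have := nonneg (-a) (-b) (by linarith) h
        rw [sgnPow_neg, sgnPow_neg, abs_neg, abs_neg, e, e] at this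
        exact this
      · have := nonneg (-b) (-a) (by linarith) h
        rw [sgnPow_neg, sgnPow_neg, abs_neg, abs_neg, e, e] at this
        rw [abs_sub_comm, abs_sub_comm a b, add_comm |a|]
        exact this
  exact key a b

lemma toReal_one_le (P : ℝ≥0∞) (h1 : 1 ≤ P) (h2 : P ≠ ∞) : 1 ≤ P.toReal := by
  rw [← ENNReal.toReal_one]
  exact ENNReal.toReal_mono h2 h1

lemma norm_sgnPow_rpow (P Q : ℝ≥0∞) (hP : 0 < P.toReal) (hQ : 0 < Q.toReal) (t : ℝ) :
    ‖sgnPow (P.toReal / Q.toReal) t‖ ^ Q.toReal = ‖t‖ ^ P.toReal := by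
  rw [Real.norm_eq_abs, Real.norm_eq_abs, abs_sgnPow _ _ (by positivity),
    ← Real.rpow_mul (abs_nonneg t), div_mul_cancel₀ _ hQ.ne']



lemma memℓp_sgnPow (P Q : ℝ≥0∞) (hP : 0 < P.toReal) (hQ : 0 < Q.toReal)
    (f : lp (fun _ : ℕ => ℝ) P) :
    Memℓp (fun n => sgnPow (P.toReal / Q.toReal) (f n)) Q := by
  apply memℓp_gen
  have hsum := (lp.hasSum_norm hP f).summable
  have : (fun n => ‖sgnPow (P.toReal / Q.toReal) (f n)‖ ^ Q.toReal)
      = fun n => ‖f n‖ ^ P.toReal := by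
    funext n; exact norm_sgnPow_rpow P Q hP hQ (f n)
  rw [this]; exact hsum

noncomputable def mazurFun (P Q : ℝ≥0∞) (hP : 0 < P.toReal) (hQ : 0 < Q.toReal)
    (f : lp (fun _ : ℕ => ℝ) P) : lp (fun _ : ℕ => ℝ) Q :=
  ⟨fun n => sgnPow (P.toReal / Q.toReal) (f n), memℓp_sgnPow P Q hP hQ f⟩

lemma mazurFun_apply (P Q : ℝ≥0∞) (hP : 0 < P.toReal) (hQ : 0 < Q.toReal) (f : lp (fun _ : ℕ => ℝ) P)
    (n : ℕ) : (mazurFun P Q hP hQ f) n = sgnPow (P.toReal / Q.toReal) (f n) := rfl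

lemma mazurFun_comp (P Q : ℝ≥0∞) (hP : 0 < P.toReal) (hQ : 0 < Q.toReal) (f : lp (fun _ : ℕ => ℝ) P) :
    mazurFun Q P hQ hP (mazurFun P Q hP hQ f) = f := by
  apply lp.ext
  funext n
  rw [mazurFun_apply, mazurFun_apply, sgnPow_comp _ _ _ (by positivity) (by positivity),
    div_mul_div_comm, mul_comm P.toReal Q.toReal, div_self (by positivity), sgnPow_one]

lemma mazurFun_norm_sub_le (P Q : ℝ≥0∞) [Fact (1 ≤ P)] [Fact (1 ≤ Q)] (hP : 0 < P.toReal) (hQ : 0 < Q.toReal)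
    (hPQ : P.toReal ≤ Q.toReal) (f g : lp (fun _ : ℕ => ℝ) P) :
    ‖mazurFun P Q hP hQ f - mazurFun P Q hP hQ g‖
      ≤ 2 * ‖f - g‖ ^ (P.toReal / Q.toReal) := by
  set r := P.toReal / Q.toReal with hrdef
  have hr0 : 0 < r := by positivity
  have hr1 : r ≤ 1 := (div_le_one hQ).2 hPQ
  set F := mazurFun P Q hP hQ f - mazurFun P Q hP hQ g with hFdef
  have hFs : HasSum (fun n => ‖F n‖ ^ Q.toReal) (‖F‖ ^ Q.toReal) := lp.hasSum_norm hQ F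
  have hGs : HasSum (fun n => ‖(f - g) n‖ ^ P.toReal) (‖f - g‖ ^ P.toReal) :=
    lp.hasSum_norm hP _
  have hpt : ∀ n, ‖F n‖ ^ Q.toReal ≤ 2 ^ Q.toReal * ‖(f - g) n‖ ^ P.toReal := by
    intro n
    have hFn : F n = sgnPow r (f n) - sgnPow r (g n) := by
      rw [hFdef, lp.coeFn_sub]; rfl
    have hfgn : (f - g) n = f n - g n := by rw [lp.coeFn_sub]; rfl
    calc ‖F n‖ ^ Q.toReal ≤ (2 * |f n - g n| ^ r) ^ Q.toReal := by
          apply Real.rpow_le_rpow (norm_nonneg _) _ hQ.le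
          rw [hFn, Real.norm_eq_abs]
          exact abs_sgnPow_sub_sgnPow_le hr0 hr1 (f n) (g n)
    _ = 2 ^ Q.toReal * ‖(f - g) n‖ ^ P.toReal := by
          rw [Real.mul_rpow (by norm_num) (Real.rpow_nonneg (abs_nonneg _) r),
            ← Real.rpow_mul (abs_nonneg _), hrdef, div_mul_cancel₀ _ hQ.ne', hfgn,
            Real.norm_eq_abs]
  have hsum : ‖F‖ ^ Q.toReal ≤ 2 ^ Q.toReal * ‖f - g‖ ^ P.toReal :=
    hasSum_le hpt hFs (hGs.mul_left _)
  have h2 : (2 * ‖f - g‖ ^ r) ^ Q.toReal = 2 ^ Q.toReal * ‖f - g‖ ^ P.toReal := by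
    rw [Real.mul_rpow (by norm_num : (0:ℝ) ≤ 2) (Real.rpow_nonneg (norm_nonneg (f - g)) r),
      ← Real.rpow_mul (norm_nonneg (f - g)), hrdef, div_mul_cancel₀ _ hQ.ne']
  rw [← h2] at hsum
  exact (Real.rpow_le_rpow_iff (norm_nonneg F)
    (by positivity : (0:ℝ) ≤ 2 * ‖f - g‖ ^ r) hQ).1 hsum

lemma mazurFun_continuous_of_le (P Q : ℝ≥0∞) [Fact (1 ≤ P)] [Fact (1 ≤ Q)] (hP : 0 < P.toReal) (hQ : 0 < Q.toReal)
    (hPQ : P.toReal ≤ Q.toReal) : Continuous (mazurFun P Q hP hQ) := by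
  set r := P.toReal / Q.toReal with hrdef
  have hr0 : 0 < r := by positivity
  rw [Metric.continuous_iff]
  intro g ε hε
  refine ⟨(ε / 2) ^ (1 / r), by positivity, fun f hfg => ?_⟩
  rw [dist_eq_norm] at hfg ⊢
  have h1 : ‖f - g‖ ^ r < ((ε / 2) ^ (1 / r)) ^ r :=
    Real.rpow_lt_rpow (norm_nonneg _) hfg hr0
  rw [← Real.rpow_mul (by positivity), one_div, inv_mul_cancel₀ hr0.ne', Real.rpow_one] at h1
  calc ‖mazurFun P Q hP hQ f - mazurFun P Q hP hQ g‖ ≤ 2 * ‖f - g‖ ^ r :=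
        mazurFun_norm_sub_le P Q hP hQ hPQ f g
  _ < 2 * (ε / 2) := by linarith
  _ = ε := by ring

lemma mazurFun_norm_sub_le' (P Q : ℝ≥0∞) [Fact (1 ≤ P)] [Fact (1 ≤ Q)]
    (hP : 0 < P.toReal) (hQ : 0 < Q.toReal) (hP1 : 1 ≤ P.toReal)
    (hPQ : Q.toReal < P.toReal) (f g : lp (fun _ : ℕ => ℝ) P) :
    ‖mazurFun P Q hP hQ f - mazurFun P Q hP hQ g‖
      ≤ (P.toReal / Q.toReal) *
        (2 ^ (P.toReal - 1) * (‖f‖ ^ P.toReal + ‖g‖ ^ P.toReal)) ^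
          ((1 - Q.toReal / P.toReal) / Q.toReal) * ‖f - g‖ := by
  set pr := P.toReal
  set qr := Q.toReal
  set r := pr / qr with hrdef
  have hr1 : 1 < r := (one_lt_div hQ).2 hPQ
  have hr0 : 0 < r := lt_trans one_pos hr1
  have hrr : r - 1 ≠ 0 := by linarith
  have hconj : r.HolderConjugate (r / (r - 1)) :=
    (Real.holderConjugate_iff_eq_conjExponent hr1).2 rfl
  set u : ℕ → ℝ := fun n => |f n - g n| with hudef
  set w : ℕ → ℝ := fun n => |f n| + |g n| with hwdef
  have hu0 : ∀ n, 0 ≤ u n := fun n => abs_nonneg _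
  have hw0 : ∀ n, 0 ≤ w n := fun n => add_nonneg (abs_nonneg _) (abs_nonneg _)
  set A : ℕ → ℝ := fun n => u n ^ qr with hAdef
  set B : ℕ → ℝ := fun n => w n ^ (qr * (r - 1)) with hBdef
  have hA0 : ∀ n, 0 ≤ A n := fun n => Real.rpow_nonneg (hu0 n) _
  have hB0 : ∀ n, 0 ≤ B n := fun n => Real.rpow_nonneg (hw0 n) _
  have hqr_r : qr * r = pr := by rw [hrdef, mul_div_cancel₀ _ hQ.ne']
  have hfgn : ∀ n, (f - g) n = f n - g n := fun n => by rw [lp.coeFn_sub]; rfl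
  have hA : (fun n => A n ^ r) = fun n => ‖(f - g) n‖ ^ pr := by
    funext n
    rw [hAdef, ← Real.rpow_mul (hu0 n), hqr_r, hfgn n, Real.norm_eq_abs]
  have hAsum : Summable fun n => A n ^ r := by
    rw [hA]; exact (lp.hasSum_norm hP (f - g)).summable
  have hAtsum : ∑' n, A n ^ r = ‖f - g‖ ^ pr := by
    rw [hA]; exact (lp.hasSum_norm hP (f - g)).tsum_eq
  have hB : (fun n => B n ^ (r / (r - 1))) = fun n => w n ^ pr := by
    funext n
    rw [hBdef, ← Real.rpow_mul (hw0 n)]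
    congr 1
    have h1 : (r - 1) * (r / (r - 1)) = r := by field_simp
    rw [mul_assoc, h1, hqr_r]
  have hwpt : ∀ n, w n ^ pr ≤ 2 ^ (pr - 1) * (‖f n‖ ^ pr + ‖g n‖ ^ pr) := by
    intro n
    rw [Real.norm_eq_abs, Real.norm_eq_abs]
    exact rpow_add_le_mul_rpow_add_rpow' (abs_nonneg _) (abs_nonneg _) hP1
  have hMsum : Summable fun n => 2 ^ (pr - 1) * (‖f n‖ ^ pr + ‖g n‖ ^ pr) :=
    (((lp.hasSum_norm hP f).summable.add (lp.hasSum_norm hP g).summable)).mul_left _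
  have hMtsum : ∑' n, 2 ^ (pr - 1) * (‖f n‖ ^ pr + ‖g n‖ ^ pr)
      = 2 ^ (pr - 1) * (‖f‖ ^ pr + ‖g‖ ^ pr) :=
    (((lp.hasSum_norm hP f).add (lp.hasSum_norm hP g)).mul_left _).tsum_eq
  have hwsum : Summable fun n => w n ^ pr :=
    Summable.of_nonneg_of_le (fun n => Real.rpow_nonneg (hw0 n) _) hwpt hMsum
  have hBsum : Summable fun n => B n ^ (r / (r - 1)) := by rw [hB]; exact hwsum
  obtain ⟨hABsum, hABle⟩ :=
    summable_and_inner_le_Lp_mul_Lq_tsum_of_nonneg hconj hA0 hB0 hAsum hBsum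
  set F := mazurFun P Q hP hQ f - mazurFun P Q hP hQ g with hFdef
  have hpt : ∀ n, ‖F n‖ ^ qr ≤ r ^ qr * (A n * B n) := by
    intro n
    have hFn : F n = sgnPow r (f n) - sgnPow r (g n) := by
      rw [hFdef, lp.coeFn_sub]; rfl
    have hb := abs_sgnPow_sub_sgnPow_le' hr1.le (f n) (g n)
    calc ‖F n‖ ^ qr ≤ (r * w n ^ (r - 1) * u n) ^ qr := by
          apply Real.rpow_le_rpow (norm_nonneg _) _ hQ.le
          rw [hFn, Real.norm_eq_abs]
          exact hb
    _ = r ^ qr * (A n * B n) := by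
          rw [Real.mul_rpow (mul_nonneg hr0.le (Real.rpow_nonneg (hw0 n) _)) (hu0 n),
            Real.mul_rpow hr0.le (Real.rpow_nonneg (hw0 n) _),
            ← Real.rpow_mul (hw0 n), mul_comm (r - 1) qr]
          ring
  have hFnorm : ‖F‖ ^ qr ≤ r ^ qr * ∑' n, A n * B n :=
    hasSum_le hpt (lp.hasSum_norm hQ F) (hABsum.hasSum.mul_left _)
  -- bound the Hölder product
  have hBtsum_le : ∑' n, B n ^ (r / (r - 1)) ≤ 2 ^ (pr - 1) * (‖f‖ ^ pr + ‖g‖ ^ pr) := by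
    rw [hB, ← hMtsum]
    exact Summable.tsum_le_tsum hwpt hwsum hMsum
  set M := 2 ^ (pr - 1) * (‖f‖ ^ pr + ‖g‖ ^ pr) with hMdef
  have hM0 : 0 ≤ M := by positivity
  have hexp1 : (1 : ℝ) / (r / (r - 1)) = 1 - qr / pr := by
    rw [one_div, inv_div, hrdef]
    field_simp
  have hfg_pow : (‖f - g‖ ^ pr) ^ (1 / r) = ‖f - g‖ ^ qr := by
    rw [← Real.rpow_mul (norm_nonneg _)]
    congr 1
    rw [hrdef, one_div, inv_div]
    field_simp
  have hexp0 : 0 ≤ 1 - qr / pr := by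
    have : qr / pr ≤ 1 := (div_le_one hP).2 hPQ.le
    linarith
  have hBpow_le : (∑' n, B n ^ (r / (r - 1))) ^ (1 - qr / pr) ≤ M ^ (1 - qr / pr) :=
    Real.rpow_le_rpow (tsum_nonneg fun n => Real.rpow_nonneg (hB0 n) _) hBtsum_le hexp0
  have hchain : ‖F‖ ^ qr ≤ r ^ qr * (‖f - g‖ ^ qr * M ^ (1 - qr / pr)) := by
    refine hFnorm.trans ?_
    apply mul_le_mul_of_nonneg_left _ (Real.rpow_nonneg hr0.le qr)
    calc ∑' n, A n * B n
        ≤ (∑' n, A n ^ r) ^ (1/r) * (∑' n, B n ^ (r/(r-1))) ^ (1/(r/(r-1))) := hABle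
    _ = ‖f - g‖ ^ qr * (∑' n, B n ^ (r/(r-1))) ^ (1 - qr/pr) := by
        rw [hAtsum, hfg_pow, hexp1]
    _ ≤ ‖f - g‖ ^ qr * M ^ (1 - qr/pr) :=
        mul_le_mul_of_nonneg_left hBpow_le (Real.rpow_nonneg (norm_nonneg _) _)
  have hRHS : (r * M ^ ((1 - qr/pr)/qr) * ‖f - g‖) ^ qr
      = r ^ qr * (‖f - g‖ ^ qr * M ^ (1 - qr/pr)) := by
    rw [Real.mul_rpow (mul_nonneg hr0.le (Real.rpow_nonneg hM0 _)) (norm_nonneg _),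
      Real.mul_rpow hr0.le (Real.rpow_nonneg hM0 _),
      ← Real.rpow_mul hM0, div_mul_cancel₀ _ hQ.ne']
    ring
  rw [← hRHS] at hchain
  exact (Real.rpow_le_rpow_iff (norm_nonneg F)
    (by positivity : (0:ℝ) ≤ r * M ^ ((1 - qr/pr)/qr) * ‖f - g‖) hQ).1 hchain

lemma mazurFun_continuous_of_lt (P Q : ℝ≥0∞) [Fact (1 ≤ P)] [Fact (1 ≤ Q)]
    (hP : 0 < P.toReal) (hQ : 0 < Q.toReal) (hP1 : 1 ≤ P.toReal)
    (hPQ : Q.toReal < P.toReal) : Continuous (mazurFun P Q hP hQ) := by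
  set pr := P.toReal
  set qr := Q.toReal
  have he0 : 0 ≤ (1 - qr / pr) / qr := by
    have h1 : qr / pr ≤ 1 := (div_le_one hP).2 hPQ.le
    exact div_nonneg (by linarith) hQ.le
  rw [Metric.continuous_iff]
  intro g ε hε
  set C := (pr / qr) *
      (2 ^ (pr - 1) * ((‖g‖ + 1) ^ pr + ‖g‖ ^ pr)) ^ ((1 - qr / pr) / qr) with hCdef
  have hC0 : 0 ≤ C := by positivity
  refine ⟨min 1 (ε / (C + 1)), lt_min one_pos (by positivity), fun f hfg => ?_⟩
  rw [dist_eq_norm] at hfg ⊢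
  have hfg1 : ‖f - g‖ < 1 := lt_of_lt_of_le hfg (min_le_left _ _)
  have hfg2 : ‖f - g‖ < ε / (C + 1) := lt_of_lt_of_le hfg (min_le_right _ _)
  have hfnorm : ‖f‖ ≤ ‖g‖ + 1 := by
    have h := norm_sub_norm_le f g
    linarith
  have key := mazurFun_norm_sub_le' P Q hP hQ hP1 hPQ f g
  have hMle : 2 ^ (pr - 1) * (‖f‖ ^ pr + ‖g‖ ^ pr)
      ≤ 2 ^ (pr - 1) * ((‖g‖ + 1) ^ pr + ‖g‖ ^ pr) := by
    have h1 : ‖f‖ ^ pr ≤ (‖g‖ + 1) ^ pr :=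
      Real.rpow_le_rpow (norm_nonneg _) hfnorm hP.le
    have h2 : (0:ℝ) < 2 ^ (pr - 1) := by positivity
    nlinarith
  have hcoef : (pr / qr) * (2 ^ (pr - 1) * (‖f‖ ^ pr + ‖g‖ ^ pr)) ^ ((1 - qr / pr) / qr)
      ≤ C := by
    rw [hCdef]
    apply mul_le_mul_of_nonneg_left _ (by positivity)
    exact Real.rpow_le_rpow (by positivity) hMle he0
  have hfin : C * (ε / (C + 1)) < ε := by
    rw [mul_div_assoc', div_lt_iff₀ (by positivity : (0:ℝ) < C + 1)]
    nlinarith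
  calc ‖mazurFun P Q hP hQ f - mazurFun P Q hP hQ g‖
      ≤ (pr / qr) * (2 ^ (pr - 1) * (‖f‖ ^ pr + ‖g‖ ^ pr)) ^ ((1 - qr / pr) / qr)
        * ‖f - g‖ := key
  _ ≤ C * ‖f - g‖ := mul_le_mul_of_nonneg_right hcoef (norm_nonneg _)
  _ ≤ C * (ε / (C + 1)) := mul_le_mul_of_nonneg_left hfg2.le hC0
  _ < ε := hfin

lemma mazurFun_continuous (P Q : ℝ≥0∞) [Fact (1 ≤ P)] [Fact (1 ≤ Q)]
    (hP : 0 < P.toReal) (hQ : 0 < Q.toReal) (hP1 : 1 ≤ P.toReal) :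
    Continuous (mazurFun P Q hP hQ) := by
  rcases le_or_gt P.toReal Q.toReal with h | h
  · exact mazurFun_continuous_of_le P Q hP hQ h
  · exact mazurFun_continuous_of_lt P Q hP hQ hP1 h

/-- The extended Mazur map `φ(a)_n = sgn(a_n)|a_n|^{p/2}` is a
homeomorphism from `ℓ^p(ℕ,ℝ)` onto `ℓ²(ℕ,ℝ)`. -/
theorem extended_mazur_map_homeomorphism (p : ℝ≥0∞) [Fact (1 ≤ p)] (hp : p ≠ ∞) :
    ∃ φ : lp (fun _ : ℕ => ℝ) p ≃ₜ lp (fun _ : ℕ => ℝ) 2,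
      ∀ (x : lp (fun _ : ℕ => ℝ) p) (n : ℕ),
        (φ x) n = Real.sign (x n) * |x n| ^ (p.toReal / 2) := by
  have hp1 : 1 ≤ p.toReal := toReal_one_le p Fact.out hp
  have hp0 : 0 < p.toReal := lt_of_lt_of_le one_pos hp1
  have h2R : ((2:ℝ≥0∞)).toReal = 2 := by simp
  have hq0 : 0 < ((2:ℝ≥0∞)).toReal := by rw [h2R]; norm_num
  have hq1 : 1 ≤ ((2:ℝ≥0∞)).toReal := by rw [h2R]; norm_num
  haveI : Fact ((1:ℝ≥0∞) ≤ 2) := ⟨by norm_num⟩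
  refine ⟨{ toFun := mazurFun p 2 hp0 hq0
            invFun := mazurFun 2 p hq0 hp0
            left_inv := fun f => mazurFun_comp p 2 hp0 hq0 f
            right_inv := fun f => mazurFun_comp 2 p hq0 hp0 f
            continuous_toFun := mazurFun_continuous p 2 hp0 hq0 hp1
            continuous_invFun := mazurFun_continuous 2 p hq0 hp0 hq1 }, ?_⟩
  intro x n
  show sgnPow (p.toReal / (2:ℝ≥0∞).toReal) (x n) = _
  rw [h2R, sgnPow]
end

section
/- Let X be a proper metric space with bounded geometry such that for every R > 0, every R-chain-connected subset of X is bounded (i.e., X has only finite coarse components). Then X is a coarse disjoint union of a sequence of finite metric spaces: there is a partition X = ⊔_{n∈ℕ} X_n with each X_n finite and d(X_i, X_j) → ∞ as i + j → ∞, i ≠ j. -/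
/-- A subset `C` is `R`-chain-connected if any two of its points are joined by a finite
chain inside `C` with steps of length at most `R`. -/
def IsChainConnected {X : Type*} [MetricSpace X] (R : ℝ) (C : Set X) : Prop :=
  ∀ x ∈ C, ∀ y ∈ C, ∃ (k : ℕ) (z : Fin (k + 1) → X),
    (∀ i, z i ∈ C) ∧ z 0 = x ∧ z (Fin.last k) = y ∧
    ∀ i : Fin k, dist (z i.castSucc) (z i.succ) ≤ R

private lemma chain_of_rtg {X : Type*} [MetricSpace X] (R : ℝ) {x y : X}
    (h : Relation.ReflTransGen (fun a b => dist a b ≤ R) x y) :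
    ∃ (k : ℕ) (z : Fin (k + 1) → X),
      z 0 = x ∧ z (Fin.last k) = y ∧
      (∀ i, Relation.ReflTransGen (fun a b => dist a b ≤ R) x (z i)) ∧
      ∀ i : Fin k, dist (z i.castSucc) (z i.succ) ≤ R := by
  induction h with
  | refl => exact ⟨0, fun _ => x, rfl, rfl, fun _ => .refl, fun i => i.elim0⟩
  | @tail b c hab hbc ih =>
    obtain ⟨k, z, hz0, hzl, hmem, hstep⟩ := ih
    refine ⟨k + 1, Fin.snoc z c, ?_, ?_, ?_, ?_⟩
    · rw [show (0 : Fin (k + 2)) = Fin.castSucc 0 by simp, Fin.snoc_castSucc]; exact hz0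
    · simp
    · intro i
      refine Fin.lastCases ?_ (fun j => ?_) i
      · simpa using hab.tail hbc
      · simpa using hmem j
    · intro i
      refine Fin.lastCases ?_ (fun j => ?_) i
      · simpa [Fin.succ_last, hzl] using hbc
      · simp only [Fin.succ_castSucc, Fin.snoc_castSucc]; exact hstep j

/-- A proper metric space with (discrete) bounded geometry in which every
`R`-chain-connected subset is bounded is a coarse disjoint union of a sequence of finite
metric spaces: there is a partition into finite pieces whose mutual distances tend to
infinity. -/
theorem finite_coarse_components_coarse_disjoint_union
    {X : Type*} [MetricSpace X] [ProperSpace X]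
    (hbg : ∀ r : ℝ, 0 < r → ∃ N : ℕ, ∀ x : X,
      (Metric.closedBall x r).Finite ∧ Nat.card ↥(Metric.closedBall x r) ≤ N)
    (hfcc : ∀ R : ℝ, 0 < R → ∀ C : Set X, IsChainConnected R C → Bornology.IsBounded C) :
    ∃ c : X → ℕ, (∀ n : ℕ, {x : X | c x = n}.Finite) ∧
      ∀ R : ℝ, ∃ N : ℕ, ∀ x y : X, c x ≠ c y → N ≤ c x + c y → R < dist x y := by
  classical
  obtain hX | hne := isEmpty_or_nonempty X
  · exact ⟨fun _ => 0, fun n => Set.toFinite _, fun R => ⟨0, fun x y _ _ => (hX.false x).elim⟩⟩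
  · obtain ⟨x0⟩ := hne
    -- reaching relation
    have hsymm : ∀ n : ℕ, Symmetric fun a b : X => dist a b ≤ (n : ℝ) + 1 := by
      intro n a b h; rwa [dist_comm] at h
    have hex : ∀ x : X, ∃ n : ℕ,
        Relation.ReflTransGen (fun a b : X => dist a b ≤ (n : ℝ) + 1) x0 x := by
      intro x
      refine ⟨⌈dist x0 x⌉₊, Relation.ReflTransGen.single ?_⟩
      have := Nat.le_ceil (dist x0 x)
      linarith
    refine ⟨fun x => Nat.find (hex x), ?_, ?_⟩
    · -- finiteness of each piece
      intro n
      set C : Set X := {y | Relation.ReflTransGen (fun a b : X => dist a b ≤ (n : ℝ) + 1) x0 y}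
        with hC
      have hsub : {x : X | Nat.find (hex x) = n} ⊆ C := by
        intro x hx
        have := Nat.find_spec (hex x)
        rw [Set.mem_setOf_eq] at hx
        rwa [hx] at this
      have hcc : IsChainConnected ((n : ℝ) + 1) C := by
        intro x hx y hy
        have hxy : Relation.ReflTransGen (fun a b : X => dist a b ≤ (n : ℝ) + 1) x y :=
          (have : Std.Symm (fun a b : X => dist a b ≤ (n : ℝ) + 1) := ⟨fun a b h => hsymm n h⟩
           Std.Symm.symm (r := Relation.ReflTransGen (fun a b : X => dist a b ≤ (n : ℝ) + 1)) _ _ hx).trans hy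
        obtain ⟨k, z, hz0, hzl, hmem, hstep⟩ := chain_of_rtg _ hxy
        exact ⟨k, z, fun i => hx.trans (hmem i), hz0, hzl, hstep⟩
      have hbdd : Bornology.IsBounded C := hfcc _ (by positivity) C hcc
      obtain ⟨r, hr⟩ := hbdd.subset_closedBall x0
      obtain ⟨N, hN⟩ := hbg (max r 1) (by positivity)
      refine ((hN x0).1.subset ?_).subset hsub
      exact hr.trans (Metric.closedBall_subset_closedBall (le_max_left _ _))
    · -- growing distances
      intro R
      refine ⟨2 * ⌈R⌉₊ + 2, fun x y hne hsum => ?_⟩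
      by_contra hcon
      push_neg at hcon
      have key : ∀ a b : X, dist a b ≤ R →
          Nat.find (hex b) ≤ max (Nat.find (hex a)) ⌈R⌉₊ := by
        intro a b hab
        apply Nat.find_le
        refine Relation.ReflTransGen.tail (Relation.ReflTransGen.mono ?_ _ _ (Nat.find_spec (hex a))) ?_
        · intro p q hpq
          have : ((Nat.find (hex a) : ℝ)) ≤ ((max (Nat.find (hex a)) ⌈R⌉₊ : ℕ) : ℝ) := by
            exact_mod_cast le_max_left _ _
          linarith
        · have h1 : R ≤ ⌈R⌉₊ := Nat.le_ceil R
          have h2 : ((⌈R⌉₊ : ℝ)) ≤ ((max (Nat.find (hex a)) ⌈R⌉₊ : ℕ) : ℝ) := by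
            exact_mod_cast le_max_right _ _
          linarith
      have hne' : Nat.find (hex x) ≠ Nat.find (hex y) := hne
      have hsum' : 2 * ⌈R⌉₊ + 2 ≤ Nat.find (hex x) + Nat.find (hex y) := hsum
      have h1 := key x y hcon
      have h2 := key y x (by rwa [dist_comm])
      omega
end
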